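/- Let F be a free filter on ℕ (a filter containing every cofinite subset of ℕ), identified with a subset of Cantor space 2^ω. If F has the Baire property, then F is meager. Equivalently, every free filter either is meager or does not have the Baire property. -/
import Mathlib


open MeasureTheory

/-- `F` is a filter of subsets of `ℕ`: it contains `ℕ`, is closed under finite (binary)
intersections and under supersets. -/
def IsSetFilter (F : Set (Set ℕ)) : Prop :=
  Set.univ ∈ F ∧ (∀ X ∈ F, ∀ Y ∈ F, X ∩ Y ∈ F) ∧ (∀ X ∈ F, ∀ Y : Set ℕ, X ⊆ Y → Y ∈ F)

/-- A free filter: a proper filter containing every cofinite subset of `ℕ`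
(so every member of `F` is infinite). -/
def IsFreeFilter (F : Set (Set ℕ)) : Prop :=
  IsSetFilter F ∧ ∅ ∉ F ∧ ∀ X : Set ℕ, Xᶜ.Finite → X ∈ F

open scoped Classical in
/-- The characteristic function of `X ⊆ ℕ`, as a point of Cantor space `2^ω = ℕ → Bool`. -/
noncomputable def chi (X : Set ℕ) : ℕ → Bool := fun n => if n ∈ X then true else false

/-- `μ` is the canonical product probability measure on Cantor space (the infinite product
of uniform measures on `{0,1}`, i.e. Haar measure): every cylinder determined by values on
a finite set `s` has measure `(1/2)^|s|`. -/
def IsCantorMeasure (μ : Measure (ℕ → Bool)) : Prop :=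
  ∀ (s : Finset ℕ) (f : ℕ → Bool),
    μ {x : ℕ → Bool | ∀ i ∈ s, x i = f i} = (1 / 2 : ENNReal) ^ s.card


/-- Every free filter on `ℕ` which has the Baire property (identified with a subset of
Cantor space) is meager: every free filter is either meager or lacks the Baire property. -/
theorem free_filter_meager_or_no_baire_property
    (F : Set (Set ℕ)) (hF : IsFreeFilter F)
    (hbaire : BaireMeasurableSet (chi '' F)) :
    IsMeagre (chi '' F) := by
  classical
  obtain ⟨⟨huniv, hinter, hsup⟩, hempty, hcof⟩ := hF
  -- characterize membership in the image
  have hmem : ∀ x : ℕ → Bool, x ∈ chi '' F ↔ {n | x n = true} ∈ F := by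
    intro x
    constructor
    · rintro ⟨X, hX, rfl⟩
      have : {n | chi X n = true} = X := by
        ext n; simp [chi]
      rwa [this]
    · intro h
      refine ⟨{n | x n = true}, h, funext fun n => ?_⟩
      simp only [chi, Set.mem_setOf_eq]
      split_ifs with h' <;> simp_all
  set A := chi '' F with hA
  by_contra hmeager
  obtain ⟨U, hUopen, hAU⟩ := hbaire.residualEq_isOpen
  have hsymm : IsMeagre {x | ¬ (x ∈ A ↔ x ∈ U)} := by
    rw [IsMeagre]
    have : {x | ¬ (x ∈ A ↔ x ∈ U)}ᶜ = {x | x ∈ A ↔ x ∈ U} := by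
      ext x
      simp only [Set.mem_compl_iff, Set.mem_setOf_eq, not_not]
    rw [this]
    filter_upwards [hAU] with x hx
    exact iff_of_eq hx
  -- U is nonempty
  obtain ⟨x₀, hx₀⟩ : U.Nonempty := by
    rcases Set.eq_empty_or_nonempty U with h | h
    · exfalso
      apply hmeager
      apply hsymm.mono
      intro x hx
      simp only [Set.mem_setOf_eq, h, Set.mem_empty_iff_false, iff_false]
      exact fun hn => hn hx
    · exact h
  -- find a basic cylinder inside U
  obtain ⟨I, u, hu, hIu⟩ := isOpen_pi_iff.mp hUopen x₀ hx₀
  set C : Set (ℕ → Bool) := {x | ∀ i ∈ I, x i = x₀ i} with hC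
  have hCU : C ⊆ U := by
    intro x hx
    apply hIu
    intro i hi
    rw [hx i hi]
    exact (hu i hi).2
  have hCopen : IsOpen C := by
    have : C = ⋂ i ∈ I, (fun x : ℕ → Bool => x i) ⁻¹' {x₀ i} := by
      ext x; simp [hC]
    rw [this]
    exact isOpen_biInter_finset fun i _ =>
      (isOpen_discrete _).preimage (continuous_apply i)
  have hx₀C : x₀ ∈ C := fun i _ => rfl
  -- the flip-outside-I homeomorphism
  set gf : (ℕ → Bool) → (ℕ → Bool) := fun x n => if n ∈ I then x n else !(x n) with hgf
  have hginv : ∀ x, gf (gf x) = x := by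
    intro x; funext n
    by_cases h : n ∈ I <;> simp [hgf, h]
  have hgcont : Continuous gf := by
    apply continuous_pi
    intro n
    by_cases h : n ∈ I
    · simp only [hgf, h, if_true]
      exact continuous_apply n
    · simp only [hgf, h, if_false]
      exact Continuous.comp (continuous_of_discreteTopology : Continuous Bool.not)
        (continuous_apply n)
  let g : (ℕ → Bool) ≃ₜ (ℕ → Bool) :=
    { toFun := gf
      invFun := gf
      left_inv := hginv
      right_inv := hginv
      continuous_toFun := hgcont
      continuous_invFun := hgcont }
  have hgC : ∀ x ∈ C, gf x ∈ C := by
    intro x hx i hi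
    simp [hgf, hi, hx i hi]
  -- C \ A is meager, and its preimage under g is meager
  have hM1 : IsMeagre (C \ A) := by
    apply hsymm.mono
    intro x hx
    simp only [Set.mem_setOf_eq]
    intro hiff
    exact hx.2 (hiff.mpr (hCU hx.1))
  have hM2 : IsMeagre (gf ⁻¹' (C \ A)) :=
    hM1.preimage_of_isOpenMap g.continuous g.isOpenMap
  -- C is not contained in a meager set
  have hCnm : ¬ C ⊆ (C \ A) ∪ (gf ⁻¹' (C \ A)) := by
    intro hsub
    have hunion : IsMeagre ((C \ A) ∪ (gf ⁻¹' (C \ A))) := by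
      rw [IsMeagre, Set.compl_union]
      exact Filter.inter_mem hM1 hM2
    have hmeag : IsMeagre C := hunion.mono hsub
    rw [IsMeagre] at hmeag
    have hd : Dense Cᶜ := dense_of_mem_residual hmeag
    have := hd.interior_compl
    rw [compl_compl, hCopen.interior_eq] at this
    rw [this] at hx₀C
    exact hx₀C
  obtain ⟨x, hxC, hxn⟩ := Set.not_subset.mp hCnm
  simp only [Set.mem_union, Set.mem_preimage, Set.mem_diff, not_or, not_and, not_not] at hxn
  have hxA : x ∈ A := hxn.1 hxC
  have hgxA : gf x ∈ A := hxn.2 (hgC x hxC)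
  -- derive contradiction with freeness
  have hX : {n | x n = true} ∈ F := (hmem x).mp hxA
  have hY : {n | gf x n = true} ∈ F := (hmem (gf x)).mp hgxA
  have hXY : {n | x n = true} ∩ {n | gf x n = true} ∈ F := hinter _ hX _ hY
  have hZ : ((I : Set ℕ))ᶜ ∈ F := hcof _ (by simp [I.finite_toSet])
  have h0 : ({n | x n = true} ∩ {n | gf x n = true}) ∩ ((I : Set ℕ))ᶜ ∈ F :=
    hinter _ hXY _ hZ
  have : ({n | x n = true} ∩ {n | gf x n = true}) ∩ ((I : Set ℕ))ᶜ = ∅ := by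
    ext n
    simp only [Set.mem_inter_iff, Set.mem_setOf_eq, Set.mem_compl_iff, Finset.mem_coe,
      Set.mem_empty_iff_false, iff_false]
    rintro ⟨⟨h1, h2⟩, h3⟩
    simp [hgf, h3, h1] at h2
  rw [this] at h0
  exact hempty h0
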